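/- arXiv:2605.12219 — 3 statements merged into one kernel-verified Lean document; each statement's English description precedes it below -/
import Mathlib

section
/- For the function c₂(x) = 1/(x²+1) − sin(e^{x²})/(x²+1)², the three sets {x : c₂'(x) > 0}, {x : c₂'(x) < 0}, and {x : c₂'(x) = 0} are all unbounded subsets of ℝ. -/
open Real Filter

noncomputable def gAux (x : ℝ) : ℝ :=
  (-(2*x) * (1 + Real.cos (Real.exp (x^2)) * Real.exp (x^2)) * (x^2+1)
    + 4*x*Real.sin (Real.exp (x^2))) / (x^2+1)^3

lemma hasDerivAt_c2 (x : ℝ) :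
    HasDerivAt (fun x : ℝ => 1 / (x ^ 2 + 1) - Real.sin (Real.exp (x ^ 2)) / (x ^ 2 + 1) ^ 2)
      (gAux x) x := by
  have hu : (x^2+1 : ℝ) ≠ 0 := by positivity
  have h1 : HasDerivAt (fun x : ℝ => x^2+1) (2*x) x := by
    simpa using (hasDerivAt_pow 2 x).add_const 1
  have h2 := (hasDerivAt_const x (1:ℝ)).fun_div h1 hu
  have h3 : HasDerivAt (fun x : ℝ => Real.exp (x^2)) (Real.exp (x^2) * (2*x)) x := by
    simpa using (by simpa using (hasDerivAt_pow 2 x) : HasDerivAt (fun x : ℝ => x^2) (2*x) x).exp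
  have h4 := h3.sin
  have h5 : HasDerivAt (fun x : ℝ => (x^2+1)^2) (2*(x^2+1)*(2*x)) x := by
    simpa using h1.fun_pow 2
  have h6 := h4.fun_div h5 (by positivity)
  refine (h2.fun_sub h6).congr_deriv ?_
  rw [gAux]
  field_simp
  ring

lemma gAux_cont : Continuous gAux := by
  apply Continuous.div
  · fun_prop
  · fun_prop
  · intro x; positivity

lemma gAux_val (x : ℝ) (hx : Real.sin (Real.exp (x^2)) = 0) :
    gAux x = -(2*x) * (1 + Real.cos (Real.exp (x^2)) * Real.exp (x^2)) / (x^2+1)^2 := by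
  have hu : (x^2+1 : ℝ) ≠ 0 := by positivity
  rw [gAux, hx]
  field_simp
  ring

lemma exists_pts (R : ℝ) : ∃ a b : ℝ, R < a ∧ a < b ∧ 0 < gAux a ∧ gAux b < 0 := by
  set t : ℝ := (max R 1)^2 with ht
  obtain ⟨m, hm⟩ : ∃ m : ℕ, Real.exp t < m :=
    ⟨⌈Real.exp t⌉₊ + 1, lt_of_le_of_lt (Nat.le_ceil _) (by exact_mod_cast Nat.lt_succ_self _)⟩
  set E₁ : ℝ := m * (2 * π) + π with hE₁
  set E₂ : ℝ := (m + 1 : ℕ) * (2 * π) with hE₂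
  have hpi := Real.pi_gt_three
  have hmE : (m : ℝ) < E₁ := by
    have : (0:ℝ) ≤ m := Nat.cast_nonneg m
    nlinarith
  have hE1gt : Real.exp t < E₁ := lt_trans hm hmE
  have hE12 : E₁ < E₂ := by push_cast [hE₁, hE₂]; nlinarith
  have hE2gt : Real.exp t < E₂ := lt_trans hE1gt hE12
  have ht1 : (1:ℝ) ≤ t := by
    have : (1:ℝ) ≤ max R 1 := le_max_right _ _
    nlinarith [ht]
  have hexpt1 : (1:ℝ) < Real.exp t := by
    calc (1:ℝ) < Real.exp 1 := by
          have := Real.add_one_lt_exp (x := 1) one_ne_zero; linarith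
      _ ≤ Real.exp t := Real.exp_le_exp.mpr ht1
  have hE1pos : (1:ℝ) < E₁ := lt_trans hexpt1 hE1gt
  have hE2pos : (1:ℝ) < E₂ := lt_trans hexpt1 hE2gt
  -- points
  have key : ∀ E : ℝ, Real.exp t < E →
      Real.exp ((Real.sqrt (Real.log E))^2) = E ∧ max R 1 < Real.sqrt (Real.log E) := by
    intro E hE
    have hE1 : (1:ℝ) < E := lt_trans hexpt1 hE
    have hlog : t < Real.log E := (Real.lt_log_iff_exp_lt (by linarith)).2 hE
    constructor
    · rw [Real.sq_sqrt (by linarith : (0:ℝ) ≤ Real.log E), Real.exp_log (by linarith)]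
    · have := Real.sqrt_lt_sqrt (by positivity) hlog
      calc max R 1 = Real.sqrt t := by
            rw [ht, Real.sqrt_sq (le_trans zero_le_one (le_max_right _ _))]
        _ < Real.sqrt (Real.log E) := this
  obtain ⟨hexp1, hgt1⟩ := key E₁ hE1gt
  obtain ⟨hexp2, hgt2⟩ := key E₂ hE2gt
  set a := Real.sqrt (Real.log E₁)
  set b := Real.sqrt (Real.log E₂)
  have hapos : (0:ℝ) < a := lt_of_lt_of_le (by linarith [le_max_right R 1] : (0:ℝ) < max R 1) hgt1.le
  have hbpos : (0:ℝ) < b := lt_of_lt_of_le (by linarith [le_max_right R 1] : (0:ℝ) < max R 1) hgt2.le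
  have hab : a < b := by
    have hlog12 : Real.log E₁ < Real.log E₂ := Real.log_lt_log (by linarith) hE12
    exact Real.sqrt_lt_sqrt (Real.log_nonneg hE1pos.le) hlog12
  have hsin1 : Real.sin E₁ = 0 := by
    have : E₁ = ((2*m+1 : ℕ) : ℝ) * π := by push_cast; ring
    rw [this, Real.sin_nat_mul_pi]
  have hcos1 : Real.cos E₁ = -1 := Real.cos_nat_mul_two_pi_add_pi m
  have hsin2 : Real.sin E₂ = 0 := by
    have : E₂ = ((2*(m+1) : ℕ) : ℝ) * π := by
      rw [hE₂]; push_cast; ring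
    rw [this, Real.sin_nat_mul_pi]
  have hcos2 : Real.cos E₂ = 1 := Real.cos_nat_mul_two_pi (m+1)
  have hga : 0 < gAux a := by
    rw [gAux_val a (by rw [hexp1]; exact hsin1), hexp1, hcos1]
    have h1 : (0:ℝ) < 2*a*(E₁-1) := by nlinarith
    have h2 : (0:ℝ) < (a^2+1)^2 := by positivity
    have : -(2*a) * (1 + -1 * E₁) = 2*a*(E₁-1) := by ring
    rw [this]
    positivity
  have hgb : gAux b < 0 := by
    rw [gAux_val b (by rw [hexp2]; exact hsin2), hexp2, hcos2]
    apply div_neg_of_neg_of_pos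
    · nlinarith
    · positivity
  exact ⟨a, b, lt_of_le_of_lt (le_max_left R 1) hgt1, hab, hga, hgb⟩

theorem stmt_4 (c₂ : ℝ → ℝ)
    (hc₂ : c₂ = fun x => 1 / (x ^ 2 + 1) - sin (exp (x ^ 2)) / (x ^ 2 + 1) ^ 2) :
    ¬ Bornology.IsBounded {x : ℝ | deriv c₂ x > 0} ∧
    ¬ Bornology.IsBounded {x : ℝ | deriv c₂ x < 0} ∧
    ¬ Bornology.IsBounded {x : ℝ | deriv c₂ x = 0} := by
  have hderiv : deriv c₂ = gAux := by
    funext x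
    rw [hc₂]
    exact (hasDerivAt_c2 x).deriv
  rw [hderiv]
  refine ⟨?_, ?_, ?_⟩
  · rw [isBounded_iff_forall_norm_le]
    rintro ⟨C, hC⟩
    obtain ⟨a, b, hRa, hab, hga, hgb⟩ := exists_pts C
    have := hC a hga
    rw [Real.norm_eq_abs] at this
    linarith [le_abs_self a]
  · rw [isBounded_iff_forall_norm_le]
    rintro ⟨C, hC⟩
    obtain ⟨a, b, hRa, hab, hga, hgb⟩ := exists_pts C
    have := hC b hgb
    rw [Real.norm_eq_abs] at this
    linarith [le_abs_self b]
  · rw [isBounded_iff_forall_norm_le]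
    rintro ⟨C, hC⟩
    obtain ⟨a, b, hRa, hab, hga, hgb⟩ := exists_pts C
    have h0 : (0:ℝ) ∈ Set.Icc (gAux b) (gAux a) := ⟨hgb.le, hga.le⟩
    obtain ⟨c, hc, hgc⟩ := intermediate_value_Icc' hab.le gAux_cont.continuousOn h0
    have := hC c hgc
    rw [Real.norm_eq_abs] at this
    linarith [le_abs_self c, hc.1]
end

section
/- Let c₁, c₂ : ℝ → ℝ be continuous with c₁ < c₂ pointwise, m > 1, and X = {(x₁,x₂,y) ∈ ℝ² × ℝ^{m-1} : (x₁-c₁(x₂))(c₂(x₂)-x₁) = Σⱼ yⱼ²}. Then X is a closed, connected, non-compact subset of ℝ^{m+1}. -/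
open Real Filter

theorem stmt_11 (m : ℕ) (hm : 1 < m) (c₁ c₂ : ℝ → ℝ)
    (h₁ : Continuous c₁) (h₂ : Continuous c₂) (hlt : ∀ x, c₁ x < c₂ x)
    (X : Set (ℝ × ℝ × (Fin (m - 1) → ℝ)))
    (hX : X = {p | (p.1 - c₁ p.2.1) * (c₂ p.2.1 - p.1) = ∑ j, p.2.2 j ^ 2}) :
    IsClosed X ∧ IsConnected X ∧ ¬ IsCompact X := by
  obtain ⟨n, rfl⟩ : ∃ n, m = n + 2 := ⟨m - 2, by omega⟩
  subst hX
  have hcont : Continuous (fun p : ℝ × ℝ × (Fin (n + 1) → ℝ) =>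
      (p.1 - c₁ p.2.1) * (c₂ p.2.1 - p.1)) := by fun_prop
  have hcont2 : Continuous (fun p : ℝ × ℝ × (Fin (n + 1) → ℝ) =>
      ∑ j, p.2.2 j ^ 2) := by
    apply continuous_finset_sum
    intro j _
    fun_prop
  have hmemL : ∀ t : ℝ, ((c₁ t, t, 0) : ℝ × ℝ × (Fin (n + 1) → ℝ)) ∈
      {p : ℝ × ℝ × (Fin (n + 1) → ℝ) |
        (p.1 - c₁ p.2.1) * (c₂ p.2.1 - p.1) = ∑ j, p.2.2 j ^ 2} := by
    intro t; simp
  refine ⟨isClosed_eq hcont hcont2, ?_, ?_⟩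
  · show IsConnected {p : ℝ × ℝ × (Fin (n + 1) → ℝ) |
        (p.1 - c₁ p.2.1) * (c₂ p.2.1 - p.1) = ∑ j, p.2.2 j ^ 2}
    have key : ∀ t : ℝ, IsConnected {p : ℝ × ℝ × (Fin (n + 1) → ℝ) |
        ((p.1 - c₁ p.2.1) * (c₂ p.2.1 - p.1) = ∑ j, p.2.2 j ^ 2) ∧ p.2.1 = t} := by
      intro t

      set r : ℝ := (c₂ t - c₁ t) / 2 with hr
      set c : ℝ := (c₁ t + c₂ t) / 2 with hc
      have hr0 : 0 < r := by have := hlt t; rw [hr]; linarith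
      set f : EuclideanSpace ℝ (Fin (n + 2)) → ℝ × ℝ × (Fin (n + 1) → ℝ) :=
        fun v => (v 0 + c, t, fun j => v j.succ) with hf
      have hcf : Continuous f := by
        apply Continuous.prodMk
        · exact ((continuous_apply (0 : Fin (n+2))).comp (PiLp.continuous_ofLp 2 _)).add continuous_const
        · apply continuous_const.prodMk
          exact continuous_pi fun j =>
            (continuous_apply (Fin.succ j)).comp (PiLp.continuous_ofLp 2 _)
      have hnorm : ∀ v : EuclideanSpace ℝ (Fin (n + 2)), v ∈ Metric.sphere 0 r ↔
          ∑ i, v i ^ 2 = r ^ 2 := by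
        intro v
        rw [mem_sphere_zero_iff_norm, EuclideanSpace.norm_eq]
        simp only [Real.norm_eq_abs, sq_abs]
        constructor
        · intro h
          rw [← h, Real.sq_sqrt (by positivity)]
        · intro h
          rw [h, Real.sqrt_sq hr0.le]
      have himg : f '' Metric.sphere 0 r = {p : ℝ × ℝ × (Fin (n + 1) → ℝ) |
          ((p.1 - c₁ p.2.1) * (c₂ p.2.1 - p.1) = ∑ j, p.2.2 j ^ 2) ∧ p.2.1 = t} := by
        ext p
        constructor
        · rintro ⟨v, hv, rfl⟩
          rw [hnorm] at hv
          rw [Fin.sum_univ_succ] at hv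
          refine ⟨?_, rfl⟩
          simp only [hf]
          have : ∑ j : Fin (n+1), v j.succ ^ 2 = r ^ 2 - v 0 ^ 2 := by linarith
          rw [this, hr, hc]; ring
        · rintro ⟨hp, ht⟩
          refine ⟨(WithLp.equiv 2 _).symm (Fin.cons (p.1 - c) p.2.2), ?_, ?_⟩
          · rw [hnorm, Fin.sum_univ_succ]
            simp only [WithLp.equiv_symm_apply, PiLp.toLp_apply, Fin.cons_zero, Fin.cons_succ]
            rw [ht] at hp
            rw [← hp, hr, hc]; ring
          · simp only [hf, WithLp.equiv_symm_apply, PiLp.toLp_apply, Fin.cons_zero, Fin.cons_succ]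
            rw [← ht]
            ext <;> simp
      rw [← himg]
      refine (isConnected_sphere ?_ 0 hr0.le).image _ hcf.continuousOn
      rw [← Module.finrank_eq_rank, finrank_euclideanSpace_fin]
      exact_mod_cast Nat.lt_of_lt_of_le Nat.one_lt_two (by omega)
    set L : Set (ℝ × ℝ × (Fin (n + 1) → ℝ)) :=
      (fun t : ℝ => ((c₁ t, t, 0) : ℝ × ℝ × (Fin (n + 1) → ℝ))) '' Set.univ with hL
    have hLconn : IsConnected L :=
      isConnected_univ.image _ (h₁.prodMk (continuous_id.prodMk continuous_const)).continuousOn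
    have hmemLt : ∀ t : ℝ, ((c₁ t, t, 0) : ℝ × ℝ × (Fin (n + 1) → ℝ)) ∈ L :=
      fun t => ⟨t, Set.mem_univ t, rfl⟩
    have hXeq : {p : ℝ × ℝ × (Fin (n + 1) → ℝ) |
        (p.1 - c₁ p.2.1) * (c₂ p.2.1 - p.1) = ∑ j, p.2.2 j ^ 2} =
        ⋃ t : ℝ, (L ∪ {p : ℝ × ℝ × (Fin (n + 1) → ℝ) |
          ((p.1 - c₁ p.2.1) * (c₂ p.2.1 - p.1) = ∑ j, p.2.2 j ^ 2) ∧ p.2.1 = t}) := by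
      ext p
      constructor
      · intro hp
        exact Set.mem_iUnion.2 ⟨p.2.1, Or.inr ⟨hp, rfl⟩⟩
      · intro hp
        obtain ⟨t, ht⟩ := Set.mem_iUnion.1 hp
        rcases ht with h | h
        · obtain ⟨s, -, rfl⟩ := h
          exact hmemL s
        · exact h.1
    constructor
    · exact ⟨_, hmemL 0⟩
    · rw [hXeq]
      apply isPreconnected_iUnion
      · exact ⟨(c₁ 0, 0, 0), Set.mem_iInter.2 fun t => Or.inl (hmemLt 0)⟩
      · intro t
        exact IsPreconnected.union (c₁ t, t, 0) (hmemLt t) ⟨hmemL t, rfl⟩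
          hLconn.isPreconnected (key t).isPreconnected
  · intro hK
    have himg : (fun p : ℝ × ℝ × (Fin (n + 1) → ℝ) => p.2.1) ''
        {p : ℝ × ℝ × (Fin (n + 1) → ℝ) |
          (p.1 - c₁ p.2.1) * (c₂ p.2.1 - p.1) = ∑ j, p.2.2 j ^ 2} = Set.univ := by
      apply Set.eq_univ_of_forall
      intro t
      exact ⟨(c₁ t, t, 0), hmemL t, rfl⟩
    have : IsCompact (Set.univ : Set ℝ) := by
      rw [← himg]
      exact hK.image (continuous_fst.comp continuous_snd)
    exact noncompact_univ ℝ this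
end

section
/- Let c₂(x) = 1/(x²+1) − sin(e^{x²})/(x²+1)². Then the set of critical points {x : c₂'(x) = 0} is not a closed discrete subset of ℝ in the following strong sense: c₂' has zeros x_n with x_n → +∞ and, moreover, the set of critical values c₂({x : c₂'(x) = 0}) has 0 as an accumulation point. -/
open Real Filter

noncomputable def Gaux (x : ℝ) : ℝ :=
  (-(2*x)*(x^2+1) - 2*x*Real.exp (x^2)*Real.cos (Real.exp (x^2))*(x^2+1)
    + 4*x*Real.sin (Real.exp (x^2))) / (x^2+1)^3

lemma Gaux_cont : Continuous Gaux := by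
  apply Continuous.div
  · fun_prop
  · fun_prop
  · intro x; positivity

lemma deriv_c2 (x : ℝ) :
    deriv (fun x : ℝ => 1 / (x ^ 2 + 1) - Real.sin (Real.exp (x ^ 2)) / (x ^ 2 + 1) ^ 2) x
      = Gaux x := by
  have hu : (x:ℝ)^2+1 ≠ 0 := by positivity
  have h1 : HasDerivAt (fun y:ℝ => y^2+1) (2*x) x := by
    simpa using (hasDerivAt_pow 2 x).add_const 1
  have hsq : HasDerivAt (fun y:ℝ => y^2) (2*x) x := by simpa using hasDerivAt_pow 2 x
  have h3 := hsq.exp.sin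
  have hA := (hasDerivAt_const x (1:ℝ)).div h1 hu
  have hB := h3.div (h1.pow 2) (pow_ne_zero 2 hu)
  have hD := (hA.sub hB).deriv
  rw [show deriv (fun x : ℝ => 1 / (x ^ 2 + 1) - Real.sin (Real.exp (x ^ 2)) / (x ^ 2 + 1) ^ 2) x = _ from hD]
  unfold Gaux
  simp only [Pi.pow_apply]
  field_simp
  ring

lemma sqrt_tendsto : Tendsto Real.sqrt atTop atTop := by
  apply tendsto_atTop_atTop.mpr
  intro b
  refine ⟨b^2, fun a ha => ?_⟩
  calc b ≤ |b| := le_abs_self b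
  _ = Real.sqrt (b^2) := (Real.sqrt_sq_eq_abs b).symm
  _ ≤ Real.sqrt a := Real.sqrt_le_sqrt ha

theorem stmt_14 (c₂ : ℝ → ℝ)
    (hc₂ : c₂ = fun x => 1 / (x ^ 2 + 1) - sin (exp (x ^ 2)) / (x ^ 2 + 1) ^ 2) :
    (∃ x : ℕ → ℝ, (∀ n, deriv c₂ (x n) = 0) ∧ Tendsto x atTop atTop) ∧
    (0 : ℝ) ∈ closure ((c₂ '' {x | deriv c₂ x = 0}) \ {0}) := by
  subst hc₂
  set c₂ : ℝ → ℝ := fun x => 1 / (x ^ 2 + 1) - sin (exp (x ^ 2)) / (x ^ 2 + 1) ^ 2 with hc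
  have hderiv : ∀ x, deriv c₂ x = Gaux x := deriv_c2
  -- key construction
  have key : ∀ n : ℕ, ∃ x : ℝ,
      Real.sqrt (Real.log (((n:ℝ)+1)*(2*π))) < x ∧ deriv c₂ x = 0 := by
    intro n
    set t : ℝ := ((n:ℝ)+1)*(2*π) with htdef
    set s : ℝ := t + π with hsdef
    have hpi := Real.pi_gt_three
    have hn : (0:ℝ) ≤ (n:ℝ) := Nat.cast_nonneg n
    have ht1 : (1:ℝ) < t := by
      have : (2*π) ≤ t := by
        rw [htdef]; nlinarith
      nlinarith
    have hs1 : (1:ℝ) < s := by rw [hsdef]; nlinarith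
    have hts : t < s := by rw [hsdef]; nlinarith
    have htcast : t = ((n+1 : ℕ):ℝ) * (2*π) := by push_cast; ring
    have hcos_t : Real.cos t = 1 := by rw [htcast]; exact Real.cos_nat_mul_two_pi (n+1)
    have hsin_t : Real.sin t = 0 := by
      have h2 : t = ((2*(n+1) : ℕ):ℝ) * π := by push_cast; ring
      rw [h2]; exact Real.sin_nat_mul_pi (2*(n+1))
    have hcos_s : Real.cos s = -1 := by rw [hsdef, Real.cos_add_pi, hcos_t]
    have hsin_s : Real.sin s = 0 := by rw [hsdef, Real.sin_add_pi, hsin_t, neg_zero]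
    set a : ℝ := Real.sqrt (Real.log t) with hadef
    set b : ℝ := Real.sqrt (Real.log s) with hbdef
    have hlt : 0 < Real.log t := Real.log_pos ht1
    have hls : 0 < Real.log s := Real.log_pos hs1
    have hexp_a : Real.exp (a^2) = t := by
      rw [hadef, Real.sq_sqrt hlt.le, Real.exp_log (by linarith)]
    have hexp_b : Real.exp (b^2) = s := by
      rw [hbdef, Real.sq_sqrt hls.le, Real.exp_log (by linarith)]
    have ha_pos : 0 < a := Real.sqrt_pos.mpr hlt
    have hb_pos : 0 < b := Real.sqrt_pos.mpr hls
    have hab : a < b := by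
      apply Real.sqrt_lt_sqrt hlt.le
      exact Real.log_lt_log (by linarith) hts
    have hGa : Gaux a < 0 := by
      unfold Gaux
      rw [hexp_a, hsin_t, hcos_t]
      apply div_neg_of_neg_of_pos
      · nlinarith [sq_nonneg a, mul_pos ha_pos (show (0:ℝ) < a^2+1 by positivity)]
      · positivity
    have hGb : 0 < Gaux b := by
      unfold Gaux
      rw [hexp_b, hsin_s, hcos_s]
      apply div_pos
      · nlinarith [sq_nonneg b, mul_pos hb_pos (show (0:ℝ) < b^2+1 by positivity)]
      · positivity
    obtain ⟨x, hxmem, hx0⟩ :=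
      intermediate_value_Ioo hab.le Gaux_cont.continuousOn ⟨hGa, hGb⟩
    exact ⟨x, hxmem.1, by rw [hderiv, hx0]⟩
  choose x hx1 hx2 using key
  -- x tends to atTop
  have harg : Tendsto (fun n : ℕ => ((n:ℝ)+1)*(2*π)) atTop atTop := by
    apply Tendsto.atTop_mul_const (by positivity : (0:ℝ) < 2*π)
    exact tendsto_atTop_add_const_right _ 1 tendsto_natCast_atTop_atTop
  have hseq : Tendsto (fun n : ℕ => Real.sqrt (Real.log (((n:ℝ)+1)*(2*π)))) atTop atTop :=
    sqrt_tendsto.comp (Real.tendsto_log_atTop.comp harg)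
  have hxtop : Tendsto x atTop atTop :=
    tendsto_atTop_mono (fun n => (hx1 n).le) hseq
  refine ⟨⟨x, hx2, hxtop⟩, ?_⟩
  -- accumulation of critical values
  have hxpos : ∀ n, 0 < x n := fun n =>
    lt_of_le_of_lt (Real.sqrt_nonneg _) (hx1 n)
  have hval_pos : ∀ n, 0 < c₂ (x n) := by
    intro n
    have hx := hxpos n
    have hsle : Real.sin (Real.exp ((x n)^2)) ≤ 1 := Real.sin_le_one _
    have hu : (0:ℝ) < (x n)^2 + 1 := by positivity
    rw [hc]
    simp only
    rw [div_sub_div _ _ (ne_of_gt hu) (ne_of_gt (by positivity : (0:ℝ) < ((x n)^2+1)^2)),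
      ]
    apply div_pos
    · nlinarith
    · positivity
  have hmem : ∀ n, c₂ (x n) ∈ (c₂ '' {x | deriv c₂ x = 0}) \ {0} := by
    intro n
    refine ⟨⟨x n, hx2 n, rfl⟩, ?_⟩
    simp only [Set.mem_singleton_iff]
    exact ne_of_gt (hval_pos n)
  -- c₂ (x n) → 0
  have hu_top : Tendsto (fun n => (x n)^2 + 1) atTop atTop := by
    apply tendsto_atTop_add_const_right
    exact (tendsto_pow_atTop two_ne_zero).comp hxtop
  have h1 : Tendsto (fun n => 1 / ((x n)^2 + 1)) atTop (nhds 0) := by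
    simpa [one_div, Function.comp_def] using tendsto_inv_atTop_zero.comp hu_top
  have h2 : Tendsto (fun n => Real.sin (Real.exp ((x n)^2)) / ((x n)^2 + 1)^2) atTop (nhds 0) := by
    have hsq_top : Tendsto (fun n => ((x n)^2 + 1)^2) atTop atTop :=
      (tendsto_pow_atTop two_ne_zero).comp hu_top
    have hbnd : Tendsto (fun n => 1 / ((x n)^2 + 1)^2) atTop (nhds 0) := by
      simpa [one_div, Function.comp_def] using tendsto_inv_atTop_zero.comp hsq_top
    apply squeeze_zero_norm _ hbnd
    intro n
    have hu : (0:ℝ) < ((x n)^2+1)^2 := by positivity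
    rw [Real.norm_eq_abs, abs_div, abs_of_pos hu]
    gcongr
    exact Real.abs_sin_le_one _
  have hlim : Tendsto (fun n => c₂ (x n)) atTop (nhds 0) := by
    have := h1.sub h2
    simpa [hc, one_div] using this
  exact mem_closure_of_tendsto hlim (Filter.Eventually.of_forall hmem)
end
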